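/- Twofold convolution identity (count of partitions with a triangle over a fixed side): let c : ℕ → ℚ be a sequence and define p̂(m,ℓ) := (1/(m+ℓ+1))·C(m+ℓ+1, ℓ)·P_c(m,ℓ) for m, ℓ ∈ ℕ (so p̂(0,0) = 1 and p̂(m,0) = 0 for m > 0). Then for all n, k ∈ ℕ, ∑_{ℓ=0}^{k} ∑_{m=0}^{n} p̂(n−m, k−ℓ)·p̂(m, ℓ) = (2/(n+2))·C(n+k+1, k)·P_c(n,k). -/

import Mathlib

/-- Weighted composition sum `P_c(n,k) = ∑ c_{m_1}⋯c_{m_k}` over compositions of `n`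
into `k` positive parts; equals `(k!/n!)·B_{n,k}(1!c_1, 2!c_2, …)`. -/
def Pc (c : ℕ → ℚ) (n k : ℕ) : ℚ :=
  ∑ f ∈ (Finset.Nat.antidiagonalTuple k n).filter (fun f => ∀ i, 0 < f i),
    ∏ i, c (f i)

/-- `p̂(m,ℓ) = (1/(m+ℓ+1))·C(m+ℓ+1, ℓ)·P_c(m,ℓ)`. -/
def phat (c : ℕ → ℚ) (m ℓ : ℕ) : ℚ :=
  (1 / ((m + ℓ + 1 : ℕ) : ℚ)) * (((m + ℓ + 1).choose ℓ : ℕ) : ℚ) * Pc c m ℓ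

namespace PhatAux

lemma Pc_zero_right (c : ℕ → ℚ) (n : ℕ) : Pc c n 0 = if n = 0 then 1 else 0 := by
  unfold Pc
  rcases Nat.eq_zero_or_pos n with h | h
  · subst h; simp [Finset.Nat.antidiagonalTuple]
  · rw [if_neg h.ne']
    apply Finset.sum_eq_zero
    intro f hf
    simp only [Finset.mem_filter, Finset.Nat.mem_antidiagonalTuple] at hf
    simp only [Finset.univ_eq_empty, Finset.sum_empty] at hf; omega

lemma sum_head (c g : ℕ → ℚ) (n k : ℕ) :
    ∑ f ∈ (Finset.Nat.antidiagonalTuple (k+1) n).filter (fun f => ∀ i, 0 < f i),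
      g (f 0) * ∏ i : Fin k, c (f i.succ)
    = ∑ j ∈ Finset.Icc 1 n, g j * Pc c (n - j) k := by
  unfold Pc
  simp_rw [Finset.mul_sum]
  rw [Finset.sum_sigma']
  apply Finset.sum_nbij' (i := fun f => (⟨f 0, Fin.tail f⟩ : Σ _ : ℕ, Fin k → ℕ))
    (j := fun p => Fin.cons p.1 p.2)
  · intro f hf
    simp only [Finset.mem_filter, Finset.Nat.mem_antidiagonalTuple] at hf
    obtain ⟨hsum, hpos⟩ := hf
    rw [Fin.sum_univ_succ] at hsum
    simp only [Finset.mem_sigma, Finset.mem_Icc, Finset.mem_filter,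
      Finset.Nat.mem_antidiagonalTuple]
    refine ⟨⟨hpos 0, by omega⟩, by simp [Fin.tail]; omega, fun i => hpos i.succ⟩
  · intro p hp
    simp only [Finset.mem_sigma, Finset.mem_Icc, Finset.mem_filter,
      Finset.Nat.mem_antidiagonalTuple] at hp
    obtain ⟨⟨h1, h2⟩, hsum, hpos⟩ := hp
    simp only [Finset.mem_filter, Finset.Nat.mem_antidiagonalTuple]
    constructor
    · rw [Fin.sum_univ_succ]
      simp only [Fin.cons_zero, Fin.cons_succ]
      omega
    · intro i
      refine Fin.cases ?_ ?_ i
      · simpa using (show 0 < p.1 by omega)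
      · intro j; simpa using hpos j
  · intro f hf
    exact Fin.cons_self_tail f
  · intro p hp
    simp [Fin.tail]
  · intro f hf
    simp [Fin.tail]

lemma sum_coord (c : ℕ → ℚ) (n k : ℕ) (i i' : Fin k) :
    ∑ f ∈ (Finset.Nat.antidiagonalTuple k n).filter (fun f => ∀ i, 0 < f i),
      (f i : ℚ) * ∏ j, c (f j)
    = ∑ f ∈ (Finset.Nat.antidiagonalTuple k n).filter (fun f => ∀ i, 0 < f i),
      (f i' : ℚ) * ∏ j, c (f j) := by
  apply Finset.sum_nbij' (i := fun f => f ∘ Equiv.swap i i') (j := fun f => f ∘ Equiv.swap i i')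
  · intro f hf
    simp only [Finset.mem_filter, Finset.Nat.mem_antidiagonalTuple] at hf ⊢
    exact ⟨by rw [← hf.1]; exact Equiv.sum_comp (Equiv.swap i i') f, fun j => hf.2 _⟩
  · intro f hf
    simp only [Finset.mem_filter, Finset.Nat.mem_antidiagonalTuple] at hf ⊢
    exact ⟨by rw [← hf.1]; exact Equiv.sum_comp (Equiv.swap i i') f, fun j => hf.2 _⟩
  · intro f hf; funext x; simp [Function.comp, Equiv.swap_apply_self]
  · intro f hf; funext x; simp [Function.comp, Equiv.swap_apply_self]
  · intro f hf
    have h1 : ((f ∘ Equiv.swap i i') i' : ℚ) = (f i : ℚ) := by simp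
    have h2 : ∏ j, c ((f ∘ Equiv.swap i i') j) = ∏ j, c (f j) :=
      Equiv.prod_comp (Equiv.swap i i') (fun x => c (f x))
    rw [h1, h2]

lemma avg_lemma (c : ℕ → ℚ) (n k : ℕ) :
    ((k : ℚ) + 1) * ∑ f ∈ (Finset.Nat.antidiagonalTuple (k+1) n).filter (fun f => ∀ i, 0 < f i),
      (f 0 : ℚ) * ∏ j, c (f j)
    = (n : ℚ) * Pc c n (k+1) := by
  have h1 : ∀ i : Fin (k+1),
      (∑ f ∈ (Finset.Nat.antidiagonalTuple (k+1) n).filter (fun f => ∀ i, 0 < f i),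
        (f i : ℚ) * ∏ j, c (f j))
      = ∑ f ∈ (Finset.Nat.antidiagonalTuple (k+1) n).filter (fun f => ∀ i, 0 < f i),
        (f 0 : ℚ) * ∏ j, c (f j) := fun i => sum_coord c n (k+1) i 0
  have h2 : ∑ i : Fin (k+1),
      (∑ f ∈ (Finset.Nat.antidiagonalTuple (k+1) n).filter (fun f => ∀ i, 0 < f i),
        (f i : ℚ) * ∏ j, c (f j))
      = ((k : ℚ) + 1) * ∑ f ∈ (Finset.Nat.antidiagonalTuple (k+1) n).filter (fun f => ∀ i, 0 < f i),
        (f 0 : ℚ) * ∏ j, c (f j) := by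
    rw [Finset.sum_congr rfl (fun i _ => h1 i)]
    simp [mul_comm]
  rw [← h2, Finset.sum_comm]
  unfold Pc
  rw [Finset.mul_sum]
  apply Finset.sum_congr rfl
  intro f hf
  simp only [Finset.mem_filter, Finset.Nat.mem_antidiagonalTuple] at hf
  rw [← Finset.sum_mul]
  congr 1
  rw [← Nat.cast_sum, hf.1]

lemma key_sum (c : ℕ → ℚ) (n k : ℕ) (s : ℚ) :
    ((k : ℚ) + 1) * ∑ j ∈ Finset.Icc 1 n, (s + (j : ℚ)) * c j * Pc c (n - j) k
    = (s * ((k : ℚ) + 1) + (n : ℚ)) * Pc c n (k+1) := by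
  rw [← sum_head c (fun j => (s + (j : ℚ)) * c j) n k]
  have split : ∀ f : Fin (k+1) → ℕ,
      (s + ((f 0 : ℕ) : ℚ)) * c (f 0) * ∏ i : Fin k, c (f i.succ)
      = s * ∏ j, c (f j) + ((f 0 : ℕ) : ℚ) * ∏ j, c (f j) := by
    intro f
    rw [Fin.prod_univ_succ (fun j => c (f j))]
    ring
  simp only [split]
  rw [Finset.sum_add_distrib, mul_add, ← Finset.mul_sum, avg_lemma]
  unfold Pc
  ring

/-- `Qc c t n k` is `Φ_{t+1}(n,k) = ((t+1)/(n+t+1))·C(n+k+t, k)·P_c(n,k)`. -/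
def Qc (c : ℕ → ℚ) (t n k : ℕ) : ℚ :=
  ((t : ℚ) + 1) / ((n : ℚ) + (t : ℚ) + 1) * (((n + k + t).choose k : ℕ) : ℚ) * Pc c n k

lemma Qc_zero_k (c : ℕ → ℚ) (t n : ℕ) : Qc c t n 0 = if n = 0 then 1 else 0 := by
  unfold Qc
  rw [Pc_zero_right]
  rcases eq_or_ne n 0 with h | h
  · subst h; simp
    exact_mod_cast Nat.succ_ne_zero t
  · simp [h]

lemma sum_Q (c : ℕ → ℚ) (t n k : ℕ) :
    ∑ j ∈ Finset.Icc 1 n, c j * Qc c (t + j) (n - j) k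
    = (((n + k + t).choose k : ℕ) : ℚ) * (((t : ℚ) + 1) * ((k : ℚ) + 1) + (n : ℚ))
        / (((n : ℚ) + (t : ℚ) + 1) * ((k : ℚ) + 1)) * Pc c n (k+1) := by
  have h1 : ∀ j ∈ Finset.Icc 1 n, c j * Qc c (t + j) (n - j) k
      = (((n + k + t).choose k : ℕ) : ℚ) / (((n : ℚ) + (t : ℚ) + 1))
        * (((((t : ℚ) + 1) + (j : ℚ))) * c j * Pc c (n - j) k) := by
    intro j hj
    rw [Finset.mem_Icc] at hj
    unfold Qc
    have e1 : (n - j) + k + (t + j) = n + k + t := by omega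
    have e2 : ((n - j : ℕ) : ℚ) = (n : ℚ) - (j : ℚ) := by
      rw [Nat.cast_sub hj.2]
    rw [e1, e2]
    have e3 : (n : ℚ) - (j : ℚ) + ((t : ℚ) + (j : ℚ)) + 1 = (n : ℚ) + (t : ℚ) + 1 := by ring
    push_cast
    rw [e3]
    ring
  rw [Finset.sum_congr rfl h1, ← Finset.mul_sum]
  have hk : ((k : ℚ) + 1) ≠ 0 := by positivity
  have := key_sum c n k ((t : ℚ) + 1)
  have h2 : ∑ j ∈ Finset.Icc 1 n, (((t : ℚ) + 1) + (j : ℚ)) * c j * Pc c (n - j) k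
      = (((t : ℚ) + 1) * ((k : ℚ) + 1) + (n : ℚ)) / ((k : ℚ) + 1) * Pc c n (k+1) := by
    field_simp
    linarith [this]
  rw [h2]
  field_simp

lemma R1 (c : ℕ → ℚ) (n k : ℕ) :
    Qc c 0 n (k+1) = ∑ j ∈ Finset.Icc 1 n, c j * Qc c j (n - j) k := by
  have h := sum_Q c 0 n k
  simp only [Nat.zero_add, Nat.cast_zero, Nat.add_zero, add_zero, zero_add] at h
  rw [h]
  unfold Qc
  have hnat : (n + k + 1) * (n + k).choose k = (n + (k+1) + 0).choose (k+1) * (k + 1) := by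
    have := Nat.add_one_mul_choose_eq (n + k) k
    simpa [Nat.succ_eq_add_one, Nat.add_assoc] using this
  have hq : ((n : ℚ) + k + 1) * (((n + k).choose k : ℕ) : ℚ)
      = (((n + (k+1) + 0).choose (k+1) : ℕ) : ℚ) * ((k : ℚ) + 1) := by
    exact_mod_cast congrArg (Nat.cast : ℕ → ℚ) hnat
  set X := (((n + k).choose k : ℕ) : ℚ) with hX
  set Y := (((n + (k+1) + 0).choose (k+1) : ℕ) : ℚ) with hY
  set P := Pc c n (k+1) with hP
  clear_value X Y P
  have h1 : ((n : ℚ) + 1) ≠ 0 := by positivity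
  have h2 : ((k : ℚ) + 1) ≠ 0 := by positivity
  rw [Nat.cast_zero, add_zero]
  field_simp
  linear_combination (-P) * hq

lemma R2 (c : ℕ → ℚ) (t n k : ℕ) :
    Qc c (t+1) n (k+1)
    = Qc c t n (k+1) + ∑ j ∈ Finset.Icc 1 n, c j * Qc c (t + 1 + j) (n - j) k := by
  rw [sum_Q c (t+1) n k]
  unfold Qc
  have e1 : n + (k+1) + (t+1) = (n + k + (t+1)) + 1 := by omega
  have e2 : n + (k+1) + t = n + k + (t+1) := by omega
  rw [e1, e2]
  have hPas : ((n + k + (t+1)) + 1).choose (k+1)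
      = (n + k + (t+1)).choose k + (n + k + (t+1)).choose (k+1) := Nat.choose_succ_succ _ _
  have hCnat : (n + k + (t+1)).choose (k+1) * (k+1) = (n + k + (t+1)).choose k * (n + t + 1) := by
    rw [Nat.choose_succ_right_eq]
    congr 1
    omega
  have hY : ((((n + k + (t+1)) + 1).choose (k+1) : ℕ) : ℚ)
      = (((n + k + (t+1)).choose k : ℕ) : ℚ) + (((n + k + (t+1)).choose (k+1) : ℕ) : ℚ) := by
    rw [hPas]; push_cast; ring
  have hBA : (((n + k + (t+1)).choose (k+1) : ℕ) : ℚ)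
      = ((n : ℚ) + t + 1) * (((n + k + (t+1)).choose k : ℕ) : ℚ) / ((k : ℚ) + 1) := by
    have h' : (((n + k + (t+1)).choose (k+1) : ℕ) : ℚ) * ((k : ℚ) + 1)
        = (((n + k + (t+1)).choose k : ℕ) : ℚ) * ((n : ℚ) + t + 1) := by
      exact_mod_cast hCnat
    have h3 : ((k : ℚ) + 1) ≠ 0 := by positivity
    field_simp
    linarith [h']
  rw [hY, hBA]
  push_cast
  have h1 : ((n : ℚ) + t + 1) ≠ 0 := by positivity
  have h2 : ((n : ℚ) + t + 2) ≠ 0 := by positivity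
  have h3 : ((k : ℚ) + 1) ≠ 0 := by positivity
  field_simp
  ring

lemma reindex (h : ℕ → ℕ → ℚ) (n : ℕ) :
    ∑ m ∈ Finset.range (n+1), ∑ j ∈ Finset.Icc 1 m, h j m
    = ∑ j ∈ Finset.Icc 1 n, ∑ m' ∈ Finset.range (n - j + 1), h j (j + m') := by
  rw [Finset.sum_sigma', Finset.sum_sigma']
  apply Finset.sum_nbij' (i := fun p => (⟨p.2, p.1 - p.2⟩ : Σ _ : ℕ, ℕ))
    (j := fun p => (⟨p.1 + p.2, p.1⟩ : Σ _ : ℕ, ℕ))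
  · rintro ⟨m, j⟩ hp
    simp only [Finset.mem_sigma, Finset.mem_range, Finset.mem_Icc] at hp ⊢
    omega
  · rintro ⟨j, m'⟩ hp
    simp only [Finset.mem_sigma, Finset.mem_range, Finset.mem_Icc] at hp ⊢
    omega
  · rintro ⟨m, j⟩ hp
    simp only [Finset.mem_sigma, Finset.mem_range, Finset.mem_Icc] at hp
    have e : j + (m - j) = m := by omega
    simp only [e]
  · rintro ⟨j, m'⟩ hp
    simp only [Finset.mem_sigma, Finset.mem_range, Finset.mem_Icc] at hp
    simp only [Nat.add_sub_cancel_left]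
  · rintro ⟨m, j⟩ hp
    simp only [Finset.mem_sigma, Finset.mem_range, Finset.mem_Icc] at hp
    have : j + (m - j) = m := by omega
    simp [this]

lemma delta_sum (c : ℕ → ℚ) (t v n K : ℕ) :
    ∑ m ∈ Finset.range (n+1), Qc c t (n-m) K * Qc c v m 0 = Qc c t n K := by
  have h : ∀ m ∈ Finset.range (n+1), Qc c t (n-m) K * Qc c v m 0
      = if m = 0 then Qc c t n K else 0 := by
    intro m _
    rw [Qc_zero_k]
    rcases eq_or_ne m 0 with h | h
    · subst h; simp
    · simp [h]
  rw [Finset.sum_congr rfl h, Finset.sum_ite_eq' (Finset.range (n+1)) 0]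
  simp

lemma conv_eq (c : ℕ → ℚ) : ∀ k t u n,
    (∑ ℓ ∈ Finset.range (k+1), ∑ m ∈ Finset.range (n+1),
      Qc c t (n-m) (k-ℓ) * Qc c u m ℓ) = Qc c (t+u+1) n k := by
  intro k
  induction k with
  | zero =>
    intro t u n
    rw [Finset.sum_range_one]
    norm_num
    rw [delta_sum, Qc_zero_k, Qc_zero_k]
  | succ k ihk =>
    intro t u n
    have split : ∀ v : ℕ,
        (∑ ℓ ∈ Finset.range (k+1+1), ∑ m ∈ Finset.range (n+1),
          Qc c t (n-m) (k+1-ℓ) * Qc c v m ℓ)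
        = Qc c t n (k+1) + ∑ ℓ ∈ Finset.range (k+1), ∑ m ∈ Finset.range (n+1),
            Qc c t (n-m) (k-ℓ) * Qc c v m (ℓ+1) := by
      intro v
      rw [Finset.sum_range_succ']
      simp only [Nat.succ_sub_succ_eq_sub, Nat.sub_zero]
      rw [delta_sum]
      ring
    have push : ∀ w : ℕ → ℕ,
        (∑ ℓ ∈ Finset.range (k+1), ∑ m ∈ Finset.range (n+1),
          Qc c t (n-m) (k-ℓ) * ∑ j ∈ Finset.Icc 1 m, c j * Qc c (w j) (m-j) ℓ)
        = ∑ j ∈ Finset.Icc 1 n, c j * Qc c (t + w j + 1) (n-j) k := by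
      intro w
      rw [Finset.sum_comm]
      have step1 : ∀ m, (∑ ℓ ∈ Finset.range (k+1),
          Qc c t (n-m) (k-ℓ) * ∑ j ∈ Finset.Icc 1 m, c j * Qc c (w j) (m-j) ℓ)
          = ∑ j ∈ Finset.Icc 1 m, ∑ ℓ ∈ Finset.range (k+1),
              Qc c t (n-m) (k-ℓ) * (c j * Qc c (w j) (m-j) ℓ) := by
        intro m
        simp_rw [Finset.mul_sum]
        rw [Finset.sum_comm]
      rw [Finset.sum_congr rfl (fun m _ => step1 m)]
      rw [reindex (fun j m => ∑ ℓ ∈ Finset.range (k+1),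
        Qc c t (n-m) (k-ℓ) * (c j * Qc c (w j) (m-j) ℓ)) n]
      apply Finset.sum_congr rfl
      intro j hj
      simp only [← Nat.sub_sub, Nat.add_sub_cancel_left]
      rw [Finset.sum_comm]
      have e2 : ∀ ℓ m', Qc c t (n-j-m') (k-ℓ) * (c j * Qc c (w j) m' ℓ)
          = c j * (Qc c t (n-j-m') (k-ℓ) * Qc c (w j) m' ℓ) := by intros; ring
      simp only [e2, ← Finset.mul_sum]
      rw [ihk t (w j) (n-j)]
    induction u with
    | zero =>
      rw [split 0]
      simp only [R1 c]
      rw [push (fun j => j)]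
      have e : ∀ j : ℕ, t + j + 1 = t + 1 + j := fun j => by omega
      simp only [e]
      rw [← R2 c t n k]
    | succ u ihu =>
      rw [split (u+1)]
      have r2 : ∀ m ℓ, Qc c t (n-m) (k-ℓ) * Qc c (u+1) m (ℓ+1)
          = Qc c t (n-m) (k-ℓ) * Qc c u m (ℓ+1)
            + Qc c t (n-m) (k-ℓ) * ∑ j ∈ Finset.Icc 1 m, c j * Qc c (u+1+j) (m-j) ℓ := by
        intro m ℓ
        rw [R2]
        ring
      simp only [r2, Finset.sum_add_distrib]
      rw [push (fun j => u+1+j)]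
      have h1 : Qc c t n (k+1) + (∑ ℓ ∈ Finset.range (k+1), ∑ m ∈ Finset.range (n+1),
          Qc c t (n-m) (k-ℓ) * Qc c u m (ℓ+1)) = Qc c (t+u+1) n (k+1) := by
        rw [← split u]
        exact ihu
      have e : ∀ j : ℕ, t + (u+1+j) + 1 = (t+u+1) + 1 + j := fun j => by omega
      simp only [e]
      rw [← add_assoc, h1, ← R2 c (t+u+1) n k]
      congr 1

lemma phat_eq (c : ℕ → ℚ) (m ℓ : ℕ) : phat c m ℓ = Qc c 0 m ℓ := by
  unfold phat Qc
  have hs1 : (m + ℓ).choose ℓ = (m + ℓ).choose m := by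
    rw [← Nat.choose_symm (by omega : ℓ ≤ m + ℓ)]
    congr 1
    omega
  have hs2 : (m + ℓ + 1).choose ℓ = (m + ℓ + 1).choose (m + 1) := by
    rw [← Nat.choose_symm (by omega : ℓ ≤ m + ℓ + 1)]
    congr 1
    omega
  have hnat : (m + ℓ + 1) * (m + ℓ).choose ℓ = (m + 1) * (m + ℓ + 1).choose ℓ := by
    rw [hs1, hs2]
    have h' := Nat.add_one_mul_choose_eq (m + ℓ) m
    rw [h', Nat.mul_comm]
  have hq : ((m : ℚ) + ℓ + 1) * (((m + ℓ).choose ℓ : ℕ) : ℚ)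
      = ((m : ℚ) + 1) * (((m + ℓ + 1).choose ℓ : ℕ) : ℚ) := by
    exact_mod_cast congrArg (Nat.cast : ℕ → ℚ) hnat
  have h1 : ((m : ℚ) + ℓ + 1) ≠ 0 := by positivity
  have h2 : ((m : ℚ) + 1) ≠ 0 := by positivity
  have e : m + ℓ + 0 = m + ℓ := by omega
  rw [e]
  push_cast
  field_simp
  linear_combination (-(Pc c m ℓ)) * hq

end PhatAux

/-- Twofold convolution identity: count of partitions with a triangle over a fixed side. -/
theorem phat_twofold_convolution (c : ℕ → ℚ) (n k : ℕ) :
    ∑ ℓ ∈ Finset.range (k + 1), ∑ m ∈ Finset.range (n + 1),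
      phat c (n - m) (k - ℓ) * phat c m ℓ
    = (2 / ((n : ℚ) + 2)) * (((n + k + 1).choose k : ℕ) : ℚ) * Pc c n k := by
  have h := PhatAux.conv_eq c k 0 0 n
  simp only [PhatAux.phat_eq]
  rw [h]
  unfold PhatAux.Qc
  norm_num
  left; left
  ring_nf
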